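/- In any k=3 Stern-Brocot tree whose starting terms a/b, c/d are in lowest terms, every fraction x/y appearing in the tree satisfies (x, y) ≡ (a, b) (mod 2) componentwise or (x, y) ≡ (c, d) (mod 2) componentwise. -/

import Mathlib

/-- Reduce a fraction (numerator, denominator) to lowest terms. -/
def reduceFrac (x : ℤ × ℤ) : ℤ × ℤ :=
  (x.1 / Int.gcd x.1 x.2, x.2 / Int.gcd x.1 x.2)

/-- The reduced left weighted mediant (k = 3) of two fractions. -/
def leftMediant (x y : ℤ × ℤ) : ℤ × ℤ :=
  reduceFrac (2 * x.1 + y.1, 2 * x.2 + y.2)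

/-- The reduced right weighted mediant (k = 3) of two fractions. -/
def rightMediant (x y : ℤ × ℤ) : ℤ × ℤ :=
  reduceFrac (x.1 + 2 * y.1, x.2 + 2 * y.2)

/-- Insert the two reduced weighted mediants between every pair of consecutive fractions. -/
def insertMediants : List (ℤ × ℤ) → List (ℤ × ℤ)
  | [] => []
  | [x] => [x]
  | x :: y :: rest => x :: leftMediant x y :: rightMediant x y :: insertMediants (y :: rest)

/-- The rows of the k = 3 Stern-Brocot tree with starting terms `x` and `y`. -/
def sbRow (x y : ℤ × ℤ) : ℕ → List (ℤ × ℤ)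
  | 0 => [x, y]
  | n + 1 => insertMediants (sbRow x y n)

lemma reduce_spec (u v : ℤ) (hne : ¬(u = 0 ∧ v = 0)) (hpar : ¬((2:ℤ) ∣ u ∧ (2:ℤ) ∣ v)) :
    Int.gcd (reduceFrac (u, v)).1 (reduceFrac (u, v)).2 = 1 ∧
      (reduceFrac (u, v)).1 % 2 = u % 2 ∧ (reduceFrac (u, v)).2 % 2 = v % 2 := by
  have hgpos : 0 < Int.gcd u v := by
    rcases Nat.eq_zero_or_pos (Int.gcd u v) with h | h
    · exact absurd (Int.gcd_eq_zero_iff.mp h) hne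
    · exact h
  have hgodd : (Int.gcd u v : ℤ) % 2 = 1 := by
    by_contra h
    have h2 : (2:ℤ) ∣ (Int.gcd u v : ℤ) := by omega
    exact hpar ⟨h2.trans (Int.gcd_dvd_left u v), h2.trans (Int.gcd_dvd_right u v)⟩
  refine ⟨?_, ?_, ?_⟩
  · simpa [reduceFrac] using Int.gcd_div_gcd_div_gcd hgpos
  · have hd : (Int.gcd u v : ℤ) ∣ u := Int.gcd_dvd_left u v
    have := Int.ediv_mul_cancel hd
    have h2 : u % 2 = ((Int.gcd u v : ℤ) % 2 * ((u / (Int.gcd u v : ℤ)) % 2)) % 2 := by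
      conv_lhs => rw [← this, mul_comm]
      exact Int.mul_emod _ _ _
    rw [hgodd, one_mul, Int.emod_emod_of_dvd _ (by norm_num)] at h2
    simpa [reduceFrac] using h2.symm
  · have hd : (Int.gcd u v : ℤ) ∣ v := Int.gcd_dvd_right u v
    have := Int.ediv_mul_cancel hd
    have h2 : v % 2 = ((Int.gcd u v : ℤ) % 2 * ((v / (Int.gcd u v : ℤ)) % 2)) % 2 := by
      conv_lhs => rw [← this, mul_comm]
      exact Int.mul_emod _ _ _
    rw [hgodd, one_mul, Int.emod_emod_of_dvd _ (by norm_num)] at h2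
    simpa [reduceFrac] using h2.symm

lemma coprime_not_both_even {u v : ℤ} (h : Int.gcd u v = 1) : ¬((2:ℤ) ∣ u ∧ (2:ℤ) ∣ v) := by
  rintro ⟨h1, h2⟩
  have := Int.dvd_gcd h1 h2
  rw [h] at this
  norm_num at this

/-- The invariant: reduced, with parity class of `p` or `q`. -/
def SBPred (p q : ℤ × ℤ) (z : ℤ × ℤ) : Prop :=
  Int.gcd z.1 z.2 = 1 ∧
    ((z.1 % 2 = p.1 % 2 ∧ z.2 % 2 = p.2 % 2) ∨ (z.1 % 2 = q.1 % 2 ∧ z.2 % 2 = q.2 % 2))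

lemma leftMediant_pred (p q x y : ℤ × ℤ) (hx : SBPred p q x) (hy : SBPred p q y) :
    SBPred p q (leftMediant x y) := by
  have hne : ¬(2 * x.1 + y.1 = 0 ∧ 2 * x.2 + y.2 = 0) := by
    rintro ⟨h1, h2⟩
    exact coprime_not_both_even hy.1 ⟨⟨-x.1, by linarith⟩, ⟨-x.2, by linarith⟩⟩
  have hpar : ¬((2:ℤ) ∣ (2 * x.1 + y.1) ∧ (2:ℤ) ∣ (2 * x.2 + y.2)) := by
    rintro ⟨h1, h2⟩
    exact coprime_not_both_even hy.1 ⟨by omega, by omega⟩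
  obtain ⟨hg, h1, h2⟩ := reduce_spec _ _ hne hpar
  refine ⟨hg, ?_⟩
  have e1 : (2 * x.1 + y.1) % 2 = y.1 % 2 := by omega
  have e2 : (2 * x.2 + y.2) % 2 = y.2 % 2 := by omega
  rcases hy.2 with ⟨ha, hb⟩ | ⟨ha, hb⟩
  · exact Or.inl ⟨by rw [leftMediant, h1, e1, ha], by rw [leftMediant, h2, e2, hb]⟩
  · exact Or.inr ⟨by rw [leftMediant, h1, e1, ha], by rw [leftMediant, h2, e2, hb]⟩

lemma rightMediant_pred (p q x y : ℤ × ℤ) (hx : SBPred p q x) (hy : SBPred p q y) :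
    SBPred p q (rightMediant x y) := by
  have hne : ¬(x.1 + 2 * y.1 = 0 ∧ x.2 + 2 * y.2 = 0) := by
    rintro ⟨h1, h2⟩
    exact coprime_not_both_even hx.1 ⟨⟨-y.1, by linarith⟩, ⟨-y.2, by linarith⟩⟩
  have hpar : ¬((2:ℤ) ∣ (x.1 + 2 * y.1) ∧ (2:ℤ) ∣ (x.2 + 2 * y.2)) := by
    rintro ⟨h1, h2⟩
    exact coprime_not_both_even hx.1 ⟨by omega, by omega⟩
  obtain ⟨hg, h1, h2⟩ := reduce_spec _ _ hne hpar
  refine ⟨hg, ?_⟩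
  have e1 : (x.1 + 2 * y.1) % 2 = x.1 % 2 := by omega
  have e2 : (x.2 + 2 * y.2) % 2 = x.2 % 2 := by omega
  rcases hx.2 with ⟨ha, hb⟩ | ⟨ha, hb⟩
  · exact Or.inl ⟨by rw [rightMediant, h1, e1, ha], by rw [rightMediant, h2, e2, hb]⟩
  · exact Or.inr ⟨by rw [rightMediant, h1, e1, ha], by rw [rightMediant, h2, e2, hb]⟩

lemma insert_pred (p q : ℤ × ℤ) :
    ∀ l : List (ℤ × ℤ), (∀ z ∈ l, SBPred p q z) → ∀ z ∈ insertMediants l, SBPred p q z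
  | [] => by simp [insertMediants]
  | [x] => by simp [insertMediants]
  | x :: y :: rest => by
    intro h z hz
    rw [insertMediants] at hz
    have hx : SBPred p q x := h x (by simp)
    have hy : SBPred p q y := h y (by simp)
    rcases hz with _ | ⟨_, hz⟩
    · exact hx
    rcases hz with _ | ⟨_, hz⟩
    · exact leftMediant_pred p q x y hx hy
    rcases hz with _ | ⟨_, hz⟩
    · exact rightMediant_pred p q x y hx hy
    · exact insert_pred p q (y :: rest) (fun w hw => h w (List.mem_cons_of_mem x hw)) z hz

theorem tree_parity_classes (a b c d : ℤ) (hab : Int.gcd a b = 1) (hcd : Int.gcd c d = 1)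
    (n : ℕ) (z : ℤ × ℤ) (hz : z ∈ sbRow (a, b) (c, d) n) :
    (z.1 % 2 = a % 2 ∧ z.2 % 2 = b % 2) ∨ (z.1 % 2 = c % 2 ∧ z.2 % 2 = d % 2) := by
  have key : ∀ m, ∀ w ∈ sbRow (a, b) (c, d) m, SBPred (a, b) (c, d) w := by
    intro m
    induction m with
    | zero =>
      intro w hw
      rcases hw with _ | ⟨_, hw⟩
      · exact ⟨hab, Or.inl ⟨rfl, rfl⟩⟩
      rcases hw with _ | ⟨_, hw⟩
      · exact ⟨hcd, Or.inr ⟨rfl, rfl⟩⟩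
      · cases hw
    | succ m ih => exact insert_pred _ _ _ ih
  exact (key n z hz).2
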